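/- Let F be a finite field, A an n×n matrix over F, and x, y ∈ F^n with y ≠ Ax. If R is an n×k matrix whose k columns are independent uniformly random vectors in F^n, then the probability that Rᵀy = Rᵀ(Ax) is exactly 1/|F|^k. -/

import Mathlib

/-- Batched Freivalds' lemma: for `y ≠ A x` and `R` an `n × k` matrix with i.i.d.
uniform entries (equivalently, independent uniform columns), `Rᵀ y = Rᵀ (A x)`
holds with probability exactly `1/|F|^k`. -/
theorem batched_freivalds_matvec (F : Type*) [Field F] [Fintype F] (n k : ℕ)
    (A : Matrix (Fin n) (Fin n) F) (x y : Fin n → F) (h : y ≠ A.mulVec x) :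
    (PMF.uniformOfFintype (Matrix (Fin n) (Fin k) F)).toOuterMeasure
      {R : Matrix (Fin n) (Fin k) F |
        (fun j => ∑ i, R i j * y i) = fun j => ∑ i, R i j * A.mulVec x i} =
      1 / (Fintype.card F : ENNReal) ^ k := by
  classical
  set v : Fin n → F := y - A.mulVec x with hvdef
  have hvne : v ≠ 0 := sub_ne_zero.mpr h
  set φ : (Fin n → F) →ₗ[F] F := ∑ i, v i • (LinearMap.proj i) with hφdef
  have hφ : ∀ w : Fin n → F, φ w = ∑ i, v i * w i := by
    intro w
    simp [hφdef, LinearMap.sum_apply]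
  have hset : {R : Matrix (Fin n) (Fin k) F |
        (fun j => ∑ i, R i j * y i) = fun j => ∑ i, R i j * A.mulVec x i}
      = {R : Matrix (Fin n) (Fin k) F | ∀ j, φ (fun i => R i j) = 0} := by
    ext R
    have key : ∀ j, (φ fun i => R i j)
        = (∑ i, R i j * y i) - ∑ i, R i j * A.mulVec x i := by
      intro j
      rw [hφ, ← Finset.sum_sub_distrib]
      refine Finset.sum_congr rfl fun i _ => ?_
      simp only [hvdef, Pi.sub_apply]
      ring
    simp only [Set.mem_setOf_eq, funext_iff, key, sub_eq_zero]
  rw [hset, PMF.toOuterMeasure_uniformOfFintype_apply]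
  obtain ⟨i0, hi0⟩ := Function.ne_iff.mp hvne
  have hi0' : v i0 ≠ 0 := by simpa using hi0
  have hsurj : Function.Surjective φ := by
    intro c
    refine ⟨Pi.single i0 (c / v i0), ?_⟩
    rw [hφ, Finset.sum_eq_single i0]
    · rw [Pi.single_eq_same, mul_comm, div_mul_cancel₀ _ hi0']
    · intro b _ hb
      simp [Pi.single_eq_of_ne hb]
    · simp
  have hn : 0 < n := i0.pos
  have hrk : Module.finrank F (LinearMap.ker φ) = n - 1 := by
    have h1 := LinearMap.finrank_range_add_finrank_ker φ
    rw [LinearMap.range_eq_top.mpr hsurj, finrank_top, Module.finrank_self,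
      Module.finrank_pi] at h1
    simp only [Fintype.card_fin] at h1
    omega
  have hkercard : Fintype.card (LinearMap.ker φ) = Fintype.card F ^ (n - 1) := by
    rw [Module.card_eq_pow_finrank (K := F), hrk]
  have e : {R : Matrix (Fin n) (Fin k) F | ∀ j, φ (fun i => R i j) = 0} ≃
      (Fin k → LinearMap.ker φ) :=
    { toFun := fun R j => ⟨fun i => R.1 i j, R.2 j⟩
      invFun := fun f => ⟨fun i j => (f j).1 i, fun j => (f j).2⟩
      left_inv := fun R => rfl
      right_inv := fun f => rfl }
  have hcardS : ∀ (inst : Fintype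
      ({R : Matrix (Fin n) (Fin k) F | ∀ j, φ (fun i => R i j) = 0} : Set _)),
      @Fintype.card _ inst = Fintype.card F ^ ((n - 1) * k) := by
    intro inst
    rw [@Fintype.card_congr _ _ inst _ e, Fintype.card_fun, hkercard,
      Fintype.card_fin, ← pow_mul, Nat.mul_comm]
  rw [hcardS _]
  have hcardM : Fintype.card (Matrix (Fin n) (Fin k) F) = Fintype.card F ^ (n * k) := by
    rw [Fintype.card_congr (Matrix.of : (Fin n → Fin k → F) ≃ Matrix (Fin n) (Fin k) F).symm]
    rw [Fintype.card_fun, Fintype.card_fun, Fintype.card_fin, Fintype.card_fin,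
      ← pow_mul, Nat.mul_comm]
  rw [hcardM]
  have hq0 : (Fintype.card F : ENNReal) ≠ 0 := by
    exact_mod_cast Fintype.card_ne_zero
  have hqtop : (Fintype.card F : ENNReal) ≠ ⊤ := ENNReal.natCast_ne_top _
  have hnk : n * k = (n - 1) * k + k := by
    have h2 : n - 1 + 1 = n := Nat.succ_pred_eq_of_pos hn
    nlinarith [h2]
  push_cast
  rw [hnk, pow_add]
  nth_rewrite 1 [← mul_one ((Fintype.card F : ENNReal) ^ ((n - 1) * k))]
  rw [ENNReal.mul_div_mul_left _ _ (pow_ne_zero _ hq0) (ENNReal.pow_ne_top hqtop)]
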